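/- For a positive integer n, every element x of ℤ/nℤ satisfies x^(n+1) = x if and only if n ∈ {1, 2, 6, 42, 1806}. -/

import Mathlib

/-- The five magic numbers as a finset. -/
private lemma divisors42 : Nat.divisors 42 = {1,2,3,6,7,14,21,42} := by decide
set_option maxRecDepth 40000 in
private lemma divisors1806 :
    Nat.divisors 1806 = {1,2,3,6,7,14,21,42,43,86,129,258,301,602,903,1806} := by decide

/-- Step lemma: if `m` is one of the magic numbers, `p` is a prime with `p - 1 ∣ m`
and `p ∤ m`, then `m * p` is again magic. -/
private lemma stepE (m p : ℕ) (hm : m ∈ ({1,2,6,42,1806} : Finset ℕ)) (hp : p.Prime)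
    (h1 : (p - 1) ∣ m) (h2 : ¬ p ∣ m) : m * p ∈ ({1,2,6,42,1806} : Finset ℕ) := by
  have hp2 : 2 ≤ p := hp.two_le
  fin_cases hm
  · -- m = 1
    have : p - 1 = 1 := Nat.dvd_one.mp h1
    have hp' : p = 2 := by omega
    subst hp'; decide
  · -- m = 2
    have hle : p - 1 ≤ 2 := Nat.le_of_dvd (by norm_num) h1
    have hub : p ≤ 3 := by omega
    interval_cases p
    · exact absurd (by norm_num) h2
    · decide
  · -- m = 6
    have hle : p - 1 ≤ 6 := Nat.le_of_dvd (by norm_num) h1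
    have hub : p ≤ 7 := by omega
    interval_cases p <;> revert h1 h2 hp <;> decide
  · -- m = 42
    have hdv : p - 1 ∈ Nat.divisors 42 := Nat.mem_divisors.2 ⟨h1, by norm_num⟩
    rw [divisors42] at hdv
    simp only [Finset.mem_insert, Finset.mem_singleton] at hdv
    rcases hdv with h | h | h | h | h | h | h | h <;>
      [(have : p = 2 := by omega); (have : p = 3 := by omega); (have : p = 4 := by omega);
       (have : p = 7 := by omega); (have : p = 8 := by omega); (have : p = 15 := by omega);
       (have : p = 22 := by omega); (have : p = 43 := by omega)] <;>
      subst this <;> revert h1 h2 hp <;> decide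
  · -- m = 1806
    have hdv : p - 1 ∈ Nat.divisors 1806 := Nat.mem_divisors.2 ⟨h1, by norm_num⟩
    rw [divisors1806] at hdv
    simp only [Finset.mem_insert, Finset.mem_singleton] at hdv
    rcases hdv with h|h|h|h|h|h|h|h|h|h|h|h|h|h|h|h <;>
      [(have : p = 2 := by omega); (have : p = 3 := by omega); (have : p = 4 := by omega);
       (have : p = 7 := by omega); (have : p = 8 := by omega); (have : p = 15 := by omega);
       (have : p = 22 := by omega); (have : p = 43 := by omega); (have : p = 44 := by omega);
       (have : p = 87 := by omega); (have : p = 130 := by omega); (have : p = 259 := by omega);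
       (have : p = 302 := by omega); (have : p = 603 := by omega); (have : p = 904 := by omega);
       (have : p = 1807 := by omega)] <;>
      subst this <;> exfalso <;> revert hp h2 <;> norm_num

/-- Classification: a squarefree `n > 0` such that `p - 1 ∣ n` for every prime `p ∣ n`
is one of the magic numbers. -/
private lemma classify : ∀ n : ℕ, 0 < n → Squarefree n →
    (∀ p : ℕ, p.Prime → p ∣ n → (p - 1) ∣ n) → n ∈ ({1,2,6,42,1806} : Finset ℕ) := by
  intro n
  induction n using Nat.strong_induction_on with
  | _ n ih =>
    intro hn hsq hd
    by_cases h1 : n = 1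
    · subst h1; decide
    have hne : n.primeFactors.Nonempty := Nat.nonempty_primeFactors.2 (by omega)
    set p := n.primeFactors.max' hne with hpdef
    have hpmem : p ∈ n.primeFactors := n.primeFactors.max'_mem hne
    have hp : p.Prime := Nat.prime_of_mem_primeFactors hpmem
    have hpn : p ∣ n := Nat.dvd_of_mem_primeFactors hpmem
    obtain ⟨m, hm⟩ := hpn
    have hmn : m ∣ n := ⟨p, by rw [hm]; ring⟩
    have hpm : ¬ p ∣ m := by
      intro hdvd
      exact hp.not_isUnit (hsq p (by rw [hm]; exact mul_dvd_mul_left p hdvd))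
    have hm0 : 0 < m := by
      rcases Nat.eq_zero_or_pos m with h | h
      · subst h; simp at hm; omega
      · exact h
    have hmlt : m < n := by
      rw [hm]
      calc m = 1 * m := (one_mul m).symm
      _ < p * m := (Nat.mul_lt_mul_right hm0).2 hp.one_lt
    have hsqm : Squarefree m := hsq.squarefree_of_dvd hmn
    have coprime_of_lt : ∀ q : ℕ, 0 < q → q < p → Nat.Coprime q p := by
      intro q hq0 hqp
      refine Nat.Coprime.symm (hp.coprime_iff_not_dvd.2 ?_)
      intro hdq
      have := Nat.le_of_dvd hq0 hdq
      omega
    have hdm : ∀ q : ℕ, q.Prime → q ∣ m → (q - 1) ∣ m := by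
      intro q hq hqm
      have hqn : q ∣ n := hqm.trans hmn
      have hq1n : (q - 1) ∣ n := hd q hq hqn
      have hqlep : q ≤ p :=
        Finset.le_max' _ q (Nat.mem_primeFactors.2 ⟨hq, hqn, by omega⟩)
      have hqnep : q ≠ p := fun h => hpm (h ▸ hqm)
      have hq2 : 2 ≤ q := hq.two_le
      have hcop : Nat.Coprime (q - 1) p := coprime_of_lt _ (by omega) (by omega)
      rw [hm] at hq1n
      exact hcop.dvd_of_dvd_mul_left hq1n
    have hmmem := ih m hmlt hm0 hsqm hdm
    have hp1m : (p - 1) ∣ m := by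
      have hp1n : (p - 1) ∣ n := hd p hp ⟨m, hm⟩
      rcases Nat.eq_or_lt_of_le hp.two_le with h2 | h3
      · -- p = 2
        have : p - 1 = 1 := by omega
        rw [this]; exact one_dvd m
      · have hcop : Nat.Coprime (p - 1) p := coprime_of_lt _ (by omega) (by omega)
        rw [hm] at hp1n
        exact hcop.dvd_of_dvd_mul_left hp1n
    have : n = m * p := by rw [hm]; ring
    rw [this]
    exact stepE m p hmmem hp hp1m hpm

/-- Converse: if `n` is squarefree and `p - 1 ∣ n` for all primes `p ∣ n`, then
`x ^ (n + 1) = x` for all `x : ZMod n`. -/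
private lemma cond_of (n : ℕ) (hn : 0 < n) (hsq : Squarefree n)
    (hd : ∀ p : ℕ, p.Prime → p ∣ n → (p - 1) ∣ n) :
    ∀ x : ZMod n, x ^ (n + 1) = x := by
  haveI : NeZero n := ⟨by omega⟩
  have key : ∀ k : ℕ, k ^ (n + 1) ≡ k [MOD n] := by
    intro k
    have hk : k ≤ k ^ (n + 1) := Nat.le_self_pow (Nat.succ_ne_zero n) k
    rw [Nat.ModEq.comm, Nat.modEq_iff_dvd' hk]
    have hprod : ∏ p ∈ n.primeFactors, p = n := Nat.prod_primeFactors_of_squarefree hsq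
    have hmain : (∏ p ∈ n.primeFactors, p) ∣ k ^ (n + 1) - k := by
      apply Finset.prod_primes_dvd
      · exact fun p hp => (Nat.prime_of_mem_primeFactors hp).prime
      · intro p hpmem
        have hp : p.Prime := Nat.prime_of_mem_primeFactors hpmem
        have hpn : p ∣ n := Nat.dvd_of_mem_primeFactors hpmem
        haveI : Fact p.Prime := ⟨hp⟩
        rw [← Nat.modEq_iff_dvd' hk, Nat.ModEq.comm]
        rw [← ZMod.natCast_eq_natCast_iff]
        push_cast
        set c : ZMod p := (k : ZMod p) with hc
        by_cases hc0 : c = 0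
        · rw [hc0, zero_pow (Nat.succ_ne_zero n)]
        · obtain ⟨t, ht⟩ := hd p hp hpn
          rw [pow_succ, ht, pow_mul, ZMod.pow_card_sub_one_eq_one hc0, one_pow, one_mul]
    rwa [hprod] at hmain
  intro x
  have hx : ((x.val : ℕ) : ZMod n) = x := ZMod.natCast_rightInverse x
  rw [← hx]
  have := (ZMod.natCast_eq_natCast_iff _ _ _).2 (key x.val)
  push_cast at this
  exact this

private lemma sqfree1806 : Squarefree 1806 := by
  have h43 : Squarefree 43 := (by norm_num : Nat.Prime 43).squarefree
  have h7 : Squarefree (7 * 43) :=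
    (Nat.squarefree_mul (by norm_num)).2 ⟨(by norm_num : Nat.Prime 7).squarefree, h43⟩
  have h3 : Squarefree (3 * (7 * 43)) :=
    (Nat.squarefree_mul (by norm_num)).2 ⟨(by norm_num : Nat.Prime 3).squarefree, h7⟩
  have h2 : Squarefree (2 * (3 * (7 * 43))) :=
    (Nat.squarefree_mul (by norm_num)).2 ⟨(by norm_num : Nat.Prime 2).squarefree, h3⟩
  simpa using h2

private lemma sqfree42 : Squarefree 42 := by
  have := sqfree1806
  exact this.squarefree_of_dvd (by norm_num)

/-- Divisor condition for a concrete number via its divisor list. -/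
private lemma hd1806 : ∀ p : ℕ, p.Prime → p ∣ 1806 → (p - 1) ∣ 1806 := by
  intro p hp hdvd
  have hdv : p ∈ Nat.divisors 1806 := Nat.mem_divisors.2 ⟨hdvd, by norm_num⟩
  rw [divisors1806] at hdv
  simp only [Finset.mem_insert, Finset.mem_singleton] at hdv
  rcases hdv with h|h|h|h|h|h|h|h|h|h|h|h|h|h|h|h <;> subst h <;> revert hp <;> norm_num

private lemma hd42 : ∀ p : ℕ, p.Prime → p ∣ 42 → (p - 1) ∣ 42 := by
  intro p hp hdvd
  have hdv : p ∈ Nat.divisors 42 := Nat.mem_divisors.2 ⟨hdvd, by norm_num⟩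
  rw [divisors42] at hdv
  simp only [Finset.mem_insert, Finset.mem_singleton] at hdv
  rcases hdv with h|h|h|h|h|h|h|h <;> subst h <;> revert hp <;> norm_num

/-- For a positive integer `n`, every `x` in `ℤ/nℤ` satisfies `x ^ (n + 1) = x`
if and only if `n ∈ {1, 2, 6, 42, 1806}`. -/
theorem zmod_pow_succ_eq_self_iff (n : ℕ) (hn : 0 < n) :
    (∀ x : ZMod n, x ^ (n + 1) = x) ↔ n ∈ ({1, 2, 6, 42, 1806} : Set ℕ) := by
  constructor
  · intro h
    haveI : NeZero n := ⟨by omega⟩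
    -- translate the assumption to a congruence on naturals
    have key : ∀ k : ℕ, k ^ (n + 1) ≡ k [MOD n] := by
      intro k
      have := h (k : ZMod n)
      rw [← ZMod.natCast_eq_natCast_iff]
      push_cast
      exact this
    -- n is squarefree
    have hsq : Squarefree n := by
      rw [Nat.squarefree_iff_prime_squarefree]
      intro p hp hdvd
      have hpn : p ∣ n := (dvd_mul_right p p).trans hdvd
      set k : ℕ := n / p with hk
      have hkp : k * p = n := Nat.div_mul_cancel hpn
      have hpk : p ∣ k := (Nat.dvd_div_iff_mul_dvd hpn).2 hdvd
      have hk0 : 0 < k := Nat.div_pos (Nat.le_of_dvd hn hpn) hp.pos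
      have hklt : k < n := by
        rw [← hkp]
        calc k = k * 1 := (mul_one k).symm
        _ < k * p := (Nat.mul_lt_mul_left hk0).2 hp.one_lt
      have hx0 : ((k : ZMod n)) ≠ 0 := by
        rw [Ne, ZMod.natCast_eq_zero_iff]
        intro hdk
        have := Nat.le_of_dvd hk0 hdk
        omega
      have hx2 : ((k : ZMod n)) ^ 2 = 0 := by
        rw [pow_two, ← Nat.cast_mul, ZMod.natCast_eq_zero_iff, ← hkp]
        exact mul_dvd_mul_left k hpk
      have hxp : ((k : ZMod n)) ^ (n + 1) = 0 := by
        have hrw : n + 1 = 2 + (n - 1) := by omega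
        rw [hrw, pow_add, hx2, zero_mul]
      exact hx0 (by rw [← h (k : ZMod n), hxp])
    -- every prime factor p of n satisfies p - 1 ∣ n
    have hdvd' : ∀ p : ℕ, p.Prime → p ∣ n → (p - 1) ∣ n := by
      intro p hp hpn
      haveI : Fact p.Prime := ⟨hp⟩
      have hmodp : ∀ k : ℕ, k ^ (n + 1) ≡ k [MOD p] :=
        fun k => (key k).of_dvd hpn
      obtain ⟨g, hg⟩ := IsCyclic.exists_generator (α := (ZMod p)ˣ)
      have horder : orderOf g = p - 1 := by
        rw [orderOf_eq_card_of_forall_mem_zpowers hg, Nat.card_eq_fintype_card,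
          ZMod.card_units_eq_totient, Nat.totient_prime hp]
      set k : ℕ := ((g : ZMod p)).val with hkdef
      have hkg : ((k : ℕ) : ZMod p) = (g : ZMod p) := ZMod.natCast_rightInverse _
      have hgp : ((g : ZMod p)) ^ (n + 1) = (g : ZMod p) := by
        have := (ZMod.natCast_eq_natCast_iff _ _ _).2 (hmodp k)
        push_cast at this
        rw [hkg] at this
        exact this
      have hu : g ^ (n + 1) = g := Units.ext (by rw [Units.val_pow_eq_pow_val]; exact hgp)
      have hg1 : g ^ n = 1 := by
        have h2 : g ^ n * g = 1 * g := by rw [← pow_succ, hu, one_mul]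
        exact mul_right_cancel h2
      rw [← horder]
      exact orderOf_dvd_of_pow_eq_one hg1
    have := classify n hn hsq hdvd'
    simp only [Finset.mem_insert, Finset.mem_singleton] at this
    simpa using this
  · intro h
    simp only [Set.mem_insert_iff, Set.mem_singleton_iff] at h
    rcases h with rfl | rfl | rfl | rfl | rfl
    · exact cond_of 1 (by norm_num) squarefree_one
        (fun p hp hd => absurd (Nat.dvd_one.mp hd) hp.ne_one)
    · exact cond_of 2 (by norm_num) Nat.prime_two.squarefree
        (fun p hp hd => by
          have := (Nat.prime_dvd_prime_iff_eq hp Nat.prime_two).1 hd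
          subst this; norm_num)
    · exact cond_of 6 (by norm_num) (sqfree42.squarefree_of_dvd (by norm_num))
        (fun p hp hd => by
          have hle : p ≤ 6 := Nat.le_of_dvd (by norm_num) hd
          have h2 := hp.two_le
          interval_cases p <;> revert hp hd <;> decide)
    · exact cond_of 42 (by norm_num) sqfree42 hd42
    · exact cond_of 1806 (by norm_num) sqfree1806 hd1806
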